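/- Let X be a nonempty compact metric space, μ a finite Borel measure on X with μ(X) > 0, and f, g : X → ℝ continuous. Then osc(f+g) = osc(f) + osc(g) if and only if both ∫_X normalize(f+g) dμ = ∫_X normalize(f) dμ + ∫_X normalize(g) dμ and ∫_X normalize(−(f+g)) dμ = ∫_X normalize(−f) dμ + ∫_X normalize(−g) dμ. -/

import Mathlib

open MeasureTheory Set

/-- The (attained) minimum of `f` on a nonempty compact space. -/
noncomputable def minF {X : Type*} (f : X → ℝ) : ℝ := sInf (Set.range f)

/-- The (attained) maximum of `f` on a nonempty compact space. -/
noncomputable def maxF {X : Type*} (f : X → ℝ) : ℝ := sSup (Set.range f)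

/-- The oscillation `max f - min f`. -/
noncomputable def oscF {X : Type*} (f : X → ℝ) : ℝ := maxF f - minF f

/-- `normalize f = f - min f`. -/
noncomputable def normF {X : Type*} (f : X → ℝ) : X → ℝ := fun x => f x - minF f

/-- The minimizer set of `f`. -/
def argminF {X : Type*} (f : X → ℝ) : Set X := {x | f x = minF f}

/-- The maximizer set of `f`. -/
def argmaxF {X : Type*} (f : X → ℝ) : Set X := {x | f x = maxF f}

section Aux

variable {X : Type*} [MetricSpace X] [CompactSpace X] [Nonempty X]

lemma minF_mem (f : X → ℝ) (hf : Continuous f) : minF f ∈ Set.range f :=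
  (isCompact_range hf).sInf_mem (Set.range_nonempty f)

lemma maxF_mem (f : X → ℝ) (hf : Continuous f) : maxF f ∈ Set.range f :=
  (isCompact_range hf).sSup_mem (Set.range_nonempty f)

lemma minF_le (f : X → ℝ) (hf : Continuous f) (x : X) : minF f ≤ f x :=
  csInf_le (isCompact_range hf).bddBelow (Set.mem_range_self x)

lemma le_maxF (f : X → ℝ) (hf : Continuous f) (x : X) : f x ≤ maxF f :=
  le_csSup (isCompact_range hf).bddAbove (Set.mem_range_self x)

lemma minF_add_le (f g : X → ℝ) (hf : Continuous f) (hg : Continuous g) :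
    minF f + minF g ≤ minF (fun x => f x + g x) := by
  obtain ⟨x, hx⟩ := minF_mem (fun x => f x + g x) (hf.add hg)
  rw [← hx]
  exact add_le_add (minF_le f hf x) (minF_le g hg x)

lemma maxF_add_le (f g : X → ℝ) (hf : Continuous f) (hg : Continuous g) :
    maxF (fun x => f x + g x) ≤ maxF f + maxF g := by
  obtain ⟨x, hx⟩ := maxF_mem (fun x => f x + g x) (hf.add hg)
  rw [← hx]
  exact add_le_add (le_maxF f hf x) (le_maxF g hg x)

lemma minF_neg (f : X → ℝ) (hf : Continuous f) : minF (fun x => -f x) = -maxF f := by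
  apply le_antisymm
  · obtain ⟨x, hx⟩ := maxF_mem f hf
    calc minF (fun x => -f x) ≤ -f x := minF_le _ hf.neg x
    _ = -maxF f := by rw [hx]
  · obtain ⟨x, hx⟩ := minF_mem (fun x => -f x) hf.neg
    rw [← hx]
    simp only [neg_le_neg_iff]
    exact le_maxF f hf x

end Aux

section AuxInt

variable {X : Type*} [MetricSpace X] [CompactSpace X] [Nonempty X]
  [MeasurableSpace X] [BorelSpace X] (μ : Measure X) [IsFiniteMeasure μ]

lemma integral_normF (f : X → ℝ) (hf : Continuous f) :
    (∫ x, normF f x ∂μ) = (∫ x, f x ∂μ) - (μ Set.univ).toReal * minF f := by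
  have h1 : Integrable f μ := by
    have := (hf.locallyIntegrable (μ := μ)).integrableOn_isCompact isCompact_univ
    rwa [integrableOn_univ] at this
  simp only [normF]
  rw [integral_sub h1 (integrable_const _), integral_const, smul_eq_mul]
  rfl

end AuxInt

theorem stmt_3 {X : Type*} [MetricSpace X] [CompactSpace X] [Nonempty X]
    [MeasurableSpace X] [BorelSpace X]
    (μ : Measure X) [IsFiniteMeasure μ] (hμ : 0 < μ Set.univ)
    (f g : X → ℝ) (hf : Continuous f) (hg : Continuous g) :
    oscF (fun x => f x + g x) = oscF f + oscF g ↔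
      ((∫ x, normF (fun x => f x + g x) x ∂μ) =
          (∫ x, normF f x ∂μ) + ∫ x, normF g x ∂μ ∧
       (∫ x, normF (fun x => -(f x + g x)) x ∂μ) =
          (∫ x, normF (fun x => -f x) x ∂μ) + ∫ x, normF (fun x => -g x) x ∂μ) := by
  set M := (μ Set.univ).toReal with hM
  have hMpos : 0 < M := ENNReal.toReal_pos hμ.ne' (measure_ne_top μ _)
  have hif : Integrable f μ := by
    have := (hf.locallyIntegrable (μ := μ)).integrableOn_isCompact isCompact_univ
    rwa [integrableOn_univ] at this
  have hig : Integrable g μ := by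
    have := (hg.locallyIntegrable (μ := μ)).integrableOn_isCompact isCompact_univ
    rwa [integrableOn_univ] at this
  have hfg : Continuous (fun x => f x + g x) := hf.add hg
  have h1 : (∫ x, (f x + g x) ∂μ) = (∫ x, f x ∂μ) + ∫ x, g x ∂μ := integral_add hif hig
  have h2 : (∫ x, (-(f x + g x)) ∂μ) = (∫ x, (-f x) ∂μ) + ∫ x, (-g x) ∂μ := by
    rw [integral_neg, integral_neg, integral_neg, h1]; ring
  -- first integral equation ↔ min additivity
  have e1 : ((∫ x, normF (fun x => f x + g x) x ∂μ) =
      (∫ x, normF f x ∂μ) + ∫ x, normF g x ∂μ) ↔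
      minF (fun x => f x + g x) = minF f + minF g := by
    rw [integral_normF μ _ hfg, integral_normF μ f hf, integral_normF μ g hg, h1]
    constructor
    · intro h
      have := mul_left_cancel₀ hMpos.ne' (show M * minF (fun x => f x + g x) =
        M * (minF f + minF g) by ring_nf; ring_nf at h; linarith)
      linarith
    · intro h; rw [h]; ring
  have e2 : ((∫ x, normF (fun x => -(f x + g x)) x ∂μ) =
      (∫ x, normF (fun x => -f x) x ∂μ) + ∫ x, normF (fun x => -g x) x ∂μ) ↔
      maxF (fun x => f x + g x) = maxF f + maxF g := by
    rw [integral_normF μ (fun x => -(f x + g x)) hfg.neg, integral_normF μ (fun x => -f x) hf.neg,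
      integral_normF μ (fun x => -g x) hg.neg, h2,
      minF_neg _ hfg, minF_neg f hf, minF_neg g hg]
    constructor
    · intro h
      have := mul_left_cancel₀ hMpos.ne' (show M * maxF (fun x => f x + g x) =
        M * (maxF f + maxF g) by ring_nf; ring_nf at h; linarith)
      linarith
    · intro h; rw [h]; ring
  rw [e1, e2]
  have hmin := minF_add_le f g hf hg
  have hmax := maxF_add_le f g hf hg
  unfold oscF
  constructor
  · intro h; constructor <;> [skip; skip] <;> linarith
  · rintro ⟨h1', h2'⟩; linarith
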